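/- Let λ ≥ 1, let the agents have arbitrary strictly positive loss functions, and let C be any k-clustering. Define the exact FJR approximation of C as ρ = max over all S ⊆ N with |S| ≥ n/k of (min_{j∈S} ℓ_j(C(j))) / (max_{i∈S} ℓ_i(S)). Consider the iterative process: N_1 = N; while |N_t| ≥ n/k, let S_t be any λ-approximate solution to the Most Cohesive Cluster problem on (N_t, ⌈n/k⌉), let i_t be an agent of S_t minimizing ℓ_i(C(i)) over i ∈ S_t, and set N_{t+1} = N_t \ {i_t}. Let θ = max over all iterations t of (min_{j∈S_t} ℓ_j(C(j))) / (max_{i∈S_t} ℓ_i(S_t)). Then θ ≤ ρ ≤ λ·θ. -/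

import Mathlib

open scoped Classical

/-- The maximum of `f` over the finite set `S` (`0` if `S` is empty). -/
noncomputable def maxOver {ι : Type*} (S : Finset ι) (f : ι → ℝ) : ℝ :=
  if h : S.Nonempty then S.sup' h f else 0

/-- The minimum of `f` over the finite set `S` (`0` if `S` is empty). -/
noncomputable def minOver {ι : Type*} (S : Finset ι) (f : ι → ℝ) : ℝ :=
  if h : S.Nonempty then S.inf' h f else 0

/-- The cluster containing agent `i` under the clustering (assignment) `C`. -/
def clusterOf {n k : ℕ} (C : Fin n → Fin k) (i : Fin n) : Finset (Fin n) :=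
  Finset.univ.filter (fun j => C j = C i)

/-- The average loss of agent `i` in cluster `S`. -/
noncomputable def avgLoss {n : ℕ} (d : Fin n → Fin n → ℝ) (i : Fin n)
    (S : Finset (Fin n)) : ℝ :=
  (∑ j ∈ S, d i j) / (S.card : ℝ)

/-- The maximum loss of agent `i` in cluster `S`. -/
noncomputable def maxLoss {n : ℕ} (d : Fin n → Fin n → ℝ) (i : Fin n)
    (S : Finset (Fin n)) : ℝ :=
  maxOver S (d i)

/-- `d` is a (pseudo)metric on the agents: zero on the diagonal, symmetric, and
satisfying the triangle inequality. -/
def IsPseudometric {n : ℕ} (d : Fin n → Fin n → ℝ) : Prop :=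
  (∀ i, d i i = 0) ∧ (∀ i j, d i j = d j i) ∧ (∀ i j l, d i l ≤ d i j + d j l)

/-- `C` is in the `α`-core: there is no group `S` of at least `n/k` agents such that
`α · ℓ i S < ℓ i (C(i))` for every `i ∈ S`. -/
def InCore {n k : ℕ} (α : ℝ) (ℓ : Fin n → Finset (Fin n) → ℝ) (C : Fin n → Fin k) : Prop :=
  ¬ ∃ S : Finset (Fin n), (n : ℝ) / k ≤ S.card ∧ ∀ i ∈ S, α * ℓ i S < ℓ i (clusterOf C i)

/-- `C` satisfies `α`-FJR: there is no group `S` of at least `n/k` agents such that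
`α · max_{i ∈ S} ℓ i S < min_{j ∈ S} ℓ j (C(j))`. -/
def SatisfiesFJR {n k : ℕ} (α : ℝ) (ℓ : Fin n → Finset (Fin n) → ℝ)
    (C : Fin n → Fin k) : Prop :=
  ¬ ∃ S : Finset (Fin n), (n : ℝ) / k ≤ S.card ∧
      α * maxOver S (fun i => ℓ i S) < minOver S (fun j => ℓ j (clusterOf C j))

/-- `S` is a `lam`-approximate solution to the Most Cohesive Cluster problem on `(N', τ)`. -/
def ApproxMCC {n : ℕ} (lam : ℝ) (ℓ : Fin n → Finset (Fin n) → ℝ)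
    (N' : Finset (Fin n)) (τ : ℕ) (S : Finset (Fin n)) : Prop :=
  S ⊆ N' ∧ τ ≤ S.card ∧
  ∀ S' ⊆ N', τ ≤ S'.card →
    maxOver S (fun i => ℓ i S) ≤ lam * maxOver S' (fun i => ℓ i S')

lemma maxOver_pos' {n : ℕ} {ℓ : Fin n → Finset (Fin n) → ℝ}
    (hℓ : ∀ i S, i ∈ S → 0 < ℓ i S) {S : Finset (Fin n)} (hS : S.Nonempty) :
    0 < maxOver S (fun i => ℓ i S) := by
  rw [maxOver, dif_pos hS]
  obtain ⟨i, hi⟩ := hS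
  exact lt_of_lt_of_le (hℓ i S hi) (Finset.le_sup' (fun i => ℓ i S) hi)

lemma minOver_pos' {n k : ℕ} {ℓ : Fin n → Finset (Fin n) → ℝ}
    (hℓ : ∀ i S, i ∈ S → 0 < ℓ i S) (C : Fin n → Fin k) {S : Finset (Fin n)}
    (hS : S.Nonempty) :
    0 < minOver S (fun j => ℓ j (clusterOf C j)) := by
  rw [minOver, dif_pos hS, Finset.lt_inf'_iff]
  intro j hj
  exact hℓ j _ (by simp [clusterOf])

lemma le_maxOver' {ι : Type*} {S : Finset ι} (f : ι → ℝ) {a : ι} (ha : a ∈ S) :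
    f a ≤ maxOver S f := by
  rw [maxOver, dif_pos ⟨a, ha⟩]; exact Finset.le_sup' f ha

lemma maxOver_le' {ι : Type*} {S : Finset ι} {f : ι → ℝ} {b : ℝ} (hb : 0 ≤ b)
    (hall : ∀ a ∈ S, f a ≤ b) : maxOver S f ≤ b := by
  rw [maxOver]; split
  · exact Finset.sup'_le _ _ hall
  · exact hb

lemma maxOver_le'' {ι : Type*} {S : Finset ι} {f : ι → ℝ} {b : ℝ} (h : S.Nonempty)
    (hall : ∀ a ∈ S, f a ≤ b) : maxOver S f ≤ b := by
  rw [maxOver, dif_pos h]; exact Finset.sup'_le _ _ hall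

lemma ratio_step' {a b c m lam : ℝ} (hb : 0 < b) (hm : 0 < m) (hc : 0 ≤ c)
    (hac : a ≤ c) (hmb : m ≤ lam * b) : a / b ≤ lam * (c / m) := by
  rw [← mul_div_assoc, div_le_div_iff₀ hb hm]
  calc a * m ≤ c * m := mul_le_mul_of_nonneg_right hac hm.le
    _ ≤ c * (lam * b) := mul_le_mul_of_nonneg_left hmb hc
    _ = lam * c * b := by ring

/-- Correctness of the FJR auditing algorithm: with strictly positive losses, a clustering `C`,
and the iterative process `N_0 = N`; while `|N_t| ≥ n/k`, `S_t` is a `lam`-approximate most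
cohesive cluster on `(N_t, ⌈n/k⌉)`, `i_t ∈ S_t` minimizes `ℓ_i(C(i))` over `S_t`, and
`N_{t+1} = N_t \ {i_t}` — the returned estimate
`θ = max_t (min_{j ∈ S_t} ℓ_j(C(j))) / (max_{i ∈ S_t} ℓ_i(S_t))` satisfies `θ ≤ ρ ≤ lam·θ`,
where `ρ = max_{S ⊆ N, |S| ≥ n/k} (min_{j ∈ S} ℓ_j(C(j))) / (max_{i ∈ S} ℓ_i(S))` is the
exact FJR approximation of `C`. -/
theorem stmt12 (n k : ℕ) (hk : 1 ≤ k) (hkn : k ≤ n) (lam : ℝ) (hlam : 1 ≤ lam)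
    (ℓ : Fin n → Finset (Fin n) → ℝ) (hℓ : ∀ i S, i ∈ S → 0 < ℓ i S)
    (C : Fin n → Fin k)
    (T : ℕ) (Ns : ℕ → Finset (Fin n)) (Ss : ℕ → Finset (Fin n)) (is : ℕ → Fin n)
    (hN0 : Ns 0 = Finset.univ)
    (hloop : ∀ t < T, (n : ℝ) / k ≤ (Ns t).card)
    (hstop : ((Ns T).card : ℝ) < (n : ℝ) / k)
    (hSt : ∀ t < T, ApproxMCC lam ℓ (Ns t) ⌈(n : ℝ) / k⌉₊ (Ss t))
    (hit : ∀ t < T, is t ∈ Ss t ∧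
      ∀ i ∈ Ss t, ℓ (is t) (clusterOf C (is t)) ≤ ℓ i (clusterOf C i))
    (hNs : ∀ t < T, Ns (t + 1) = Ns t \ {is t}) :
    maxOver (Finset.range T) (fun t =>
        minOver (Ss t) (fun j => ℓ j (clusterOf C j)) /
          maxOver (Ss t) (fun i => ℓ i (Ss t))) ≤
      maxOver (Finset.univ.filter (fun S : Finset (Fin n) => (n : ℝ) / k ≤ S.card)) (fun S =>
        minOver S (fun j => ℓ j (clusterOf C j)) / maxOver S (fun i => ℓ i S)) ∧
    maxOver (Finset.univ.filter (fun S : Finset (Fin n) => (n : ℝ) / k ≤ S.card)) (fun S =>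
        minOver S (fun j => ℓ j (clusterOf C j)) / maxOver S (fun i => ℓ i S)) ≤
      lam * maxOver (Finset.range T) (fun t =>
        minOver (Ss t) (fun j => ℓ j (clusterOf C j)) /
          maxOver (Ss t) (fun i => ℓ i (Ss t))) := by
  
  classical
  have hk0 : (0:ℝ) < k := by exact_mod_cast hk
  have hnk1 : (1:ℝ) ≤ (n:ℝ)/k := by
    rw [le_div_iff₀ hk0]; simpa using (by exact_mod_cast hkn : (k:ℝ) ≤ n)
  have hnkpos : (0:ℝ) < (n:ℝ)/k := lt_of_lt_of_le one_pos hnk1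
  have hne : ∀ S : Finset (Fin n), (n:ℝ)/k ≤ (S.card:ℝ) → S.Nonempty := by
    intro S hS
    have h1 : (1:ℝ) ≤ (S.card:ℝ) := le_trans hnk1 hS
    have : 1 ≤ S.card := by exact_mod_cast h1
    exact Finset.card_pos.mp this
  -- removed-elements lemma
  have hrem : ∀ m, m ≤ T → ∀ x : Fin n, x ∉ Ns m → ∃ t < m, is t = x := by
    intro m
    induction m with
    | zero => intro _ x hx; exact absurd (by simp [hN0]) hx
    | succ m ih =>
      intro hm x hx
      have hmT : m < T := Nat.lt_of_succ_le hm
      rw [hNs m hmT] at hx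
      by_cases h : x ∈ Ns m
      · have hxe : x = is m := by
          by_contra hne'
          exact hx (Finset.mem_sdiff.mpr ⟨h, by simp [hne']⟩)
        exact ⟨m, Nat.lt_succ_self m, hxe.symm⟩
      · obtain ⟨t, ht, ht'⟩ := ih hmT.le x h
        exact ⟨t, ht.trans (Nat.lt_succ_self m), ht'⟩
  -- subset lemma
  have hsub : ∀ (S : Finset (Fin n)) (t : ℕ), t ≤ T → (∀ s < t, is s ∉ S) → S ⊆ Ns t := by
    intro S t
    induction t with
    | zero => intro _ _ x _; simp [hN0]
    | succ t ih =>
      intro ht h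
      have htT : t < T := Nat.lt_of_succ_le ht
      rw [hNs t htT]
      intro x hx
      refine Finset.mem_sdiff.mpr ⟨ih htT.le (fun s hs => h s (hs.trans (Nat.lt_succ_self t))) hx, ?_⟩
      simp only [Finset.mem_singleton]
      intro hxe
      exact h t (Nat.lt_succ_self t) (hxe ▸ hx)
  have hfne : (Finset.univ.filter (fun S : Finset (Fin n) => (n : ℝ) / k ≤ S.card)).Nonempty := by
    refine ⟨Finset.univ, Finset.mem_filter.mpr ⟨Finset.mem_univ _, ?_⟩⟩
    have : ((Finset.univ : Finset (Fin n)).card : ℝ) = n := by simp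
    rw [this]
    exact div_le_self (Nat.cast_nonneg n) (by exact_mod_cast hk)
  -- key per-S bound
  have key : ∀ S ∈ Finset.univ.filter (fun S : Finset (Fin n) => (n : ℝ) / k ≤ S.card),
      minOver S (fun j => ℓ j (clusterOf C j)) / maxOver S (fun i => ℓ i S) ≤
        lam * maxOver (Finset.range T) (fun t =>
          minOver (Ss t) (fun j => ℓ j (clusterOf C j)) /
            maxOver (Ss t) (fun i => ℓ i (Ss t))) := by
    intro S hSmem
    have hScard : (n:ℝ)/k ≤ (S.card:ℝ) := (Finset.mem_filter.mp hSmem).2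
    have hSne := hne S hScard
    have hx : ∃ x ∈ S, x ∉ Ns T := by
      by_contra h
      push_neg at h
      have hc := Finset.card_le_card h
      have : (S.card:ℝ) ≤ ((Ns T).card:ℝ) := by exact_mod_cast hc
      linarith
    obtain ⟨x, hxS, hxN⟩ := hx
    obtain ⟨t0, ht0T, ht0⟩ := hrem T le_rfl x hxN
    have hP : ∃ t, t < T ∧ is t ∈ S := ⟨t0, ht0T, ht0 ▸ hxS⟩
    obtain ⟨htT, htS⟩ := Nat.find_spec hP
    set t := Nat.find hP with htdef
    have hSsub : S ⊆ Ns t :=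
      hsub S t htT.le (fun s hs hsS => Nat.find_min hP hs ⟨hs.trans htT, hsS⟩)
    obtain ⟨hSsN, hScards, hopt⟩ := hSt t htT
    obtain ⟨hitS, hitmin⟩ := hit t htT
    have hSceil : ⌈(n:ℝ)/k⌉₊ ≤ S.card := Nat.ceil_le.mpr hScard
    have hmax := hopt S hSsub hSceil
    have hSsne : (Ss t).Nonempty :=
      Finset.card_pos.mp (le_trans (Nat.ceil_pos.mpr hnkpos) hScards)
    have hb : 0 < maxOver S (fun i => ℓ i S) := maxOver_pos' hℓ hSne
    have hm : 0 < maxOver (Ss t) (fun i => ℓ i (Ss t)) := maxOver_pos' hℓ hSsne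
    have hcpos : 0 < minOver (Ss t) (fun j => ℓ j (clusterOf C j)) := minOver_pos' hℓ C hSsne
    have hac : minOver S (fun j => ℓ j (clusterOf C j)) ≤
        minOver (Ss t) (fun j => ℓ j (clusterOf C j)) := by
      rw [minOver, dif_pos hSne, minOver, dif_pos hSsne]
      refine le_trans (Finset.inf'_le _ htS) (Finset.le_inf' _ _ (fun j hj => hitmin j hj))
    have hstep := ratio_step' hb hm hcpos.le hac hmax
    exact le_trans hstep (mul_le_mul_of_nonneg_left
      (le_maxOver' (fun t => minOver (Ss t) (fun j => ℓ j (clusterOf C j)) / maxOver (Ss t) (fun i => ℓ i (Ss t))) (Finset.mem_range.mpr htT)) (le_trans zero_le_one hlam))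
  constructor
  · -- θ ≤ ρ
    have hρ0 : 0 ≤ maxOver (Finset.univ.filter (fun S : Finset (Fin n) => (n : ℝ) / k ≤ S.card))
        (fun S => minOver S (fun j => ℓ j (clusterOf C j)) / maxOver S (fun i => ℓ i S)) := by
      obtain ⟨S, hS⟩ := hfne
      have hSne := hne S (Finset.mem_filter.mp hS).2
      exact le_trans (div_nonneg (minOver_pos' hℓ C hSne).le (maxOver_pos' hℓ hSne).le)
        (le_maxOver' (fun S => minOver S (fun j => ℓ j (clusterOf C j)) / maxOver S (fun i => ℓ i S)) hS)
    refine maxOver_le' hρ0 (fun t ht => ?_)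
    have htT := Finset.mem_range.mp ht
    obtain ⟨hSsN, hScards, -⟩ := hSt t htT
    have hmem : Ss t ∈ Finset.univ.filter (fun S : Finset (Fin n) => (n : ℝ) / k ≤ S.card) := by
      refine Finset.mem_filter.mpr ⟨Finset.mem_univ _, ?_⟩
      calc (n:ℝ)/k ≤ (⌈(n:ℝ)/k⌉₊ : ℝ) := Nat.le_ceil _
        _ ≤ ((Ss t).card : ℝ) := by exact_mod_cast hScards
    exact le_maxOver' (fun S => minOver S (fun j => ℓ j (clusterOf C j)) / maxOver S (fun i => ℓ i S)) hmem
  · -- ρ ≤ lam * θ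
    exact maxOver_le'' hfne key
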